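/- Define d_{n,m} = Tr(J_n · B_n^{2m}) for natural numbers n ≥ 1 and m ≥ 0. Then d_{n,0} = n for all n ≥ 1, d_{1,m} = 0 for all m ≥ 1, and for all n ≥ 2 and m ≥ 1 one has d_{n,m} = d_{n−1,m} + Σ_{k=0}^{m−1} d_{n−1,k} · d_{n,m−k−1}. -/

import Mathlib

/-- `J n` is the `n × n` complex matrix all of whose entries equal `1`. -/
def J (n : ℕ) : Matrix (Fin n) (Fin n) ℂ := Matrix.of fun _ _ => 1

/-- `B n` is the `n × n` complex matrix with entries `i` above the diagonal,
`-i` below the diagonal and `0` on the diagonal. -/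
def B (n : ℕ) : Matrix (Fin n) (Fin n) ℂ :=
  Matrix.of fun j k => if j < k then Complex.I else if k < j then -Complex.I else 0

/-- `d n m = Tr(J_n · B_n^{2m})`. -/
noncomputable def d (n m : ℕ) : ℂ := Matrix.trace (J n * B n ^ (2 * m))

open Matrix Finset Complex

namespace ZZ

def ones (n : ℕ) : Fin n → ℂ := fun _ => 1

lemma trace_J (n : ℕ) (M : Matrix (Fin n) (Fin n) ℂ) :
    Matrix.trace (_root_.J n * M) = ones n ⬝ᵥ M.mulVec (ones n) := by
  simp only [Matrix.trace, Matrix.diag, Matrix.mul_apply, _root_.J, ones, Matrix.of_apply, one_mul,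
    dotProduct, Matrix.mulVec, mul_one]
  exact Finset.sum_comm

lemma B_apply_symm (n : ℕ) (j k : Fin n) : B n k j = - B n j k := by
  simp only [B, Matrix.of_apply]
  rcases lt_trichotomy j k with h | h | h
  · simp [h, h.not_gt, h.ne']
  · simp [h]
  · simp [h, h.not_gt, h.ne']

lemma B_transpose (n : ℕ) : (B n)ᵀ = -(B n) := by
  ext j k
  rw [Matrix.transpose_apply, Matrix.neg_apply, B_apply_symm]

lemma dot_pow_odd {n : ℕ} (M : Matrix (Fin n) (Fin n) ℂ) (hM : Mᵀ = -M)
    (v : Fin n → ℂ) (k : ℕ) (hk : Odd k) : v ⬝ᵥ (M ^ k).mulVec v = 0 := by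
  have h1 : v ⬝ᵥ (M ^ k).mulVec v = ((M ^ k)ᵀ.mulVec v) ⬝ᵥ v := by
    rw [Matrix.dotProduct_mulVec, Matrix.mulVec_transpose]
  have h2 : (M ^ k)ᵀ = -(M ^ k) := by
    rw [Matrix.transpose_pow, hM, hk.neg_pow]
  rw [h2] at h1
  have h3 : ((-(M ^ k)).mulVec v) ⬝ᵥ v = -(v ⬝ᵥ (M ^ k).mulVec v) := by
    rw [Matrix.neg_mulVec, neg_dotProduct, dotProduct_comm]
  rw [h3] at h1
  linear_combination h1 / 2


def ee (p : ℕ) : Fin (p+1) → ℂ := fun j => if j = Fin.last p then 1 else 0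
def uu (p : ℕ) : Fin (p+1) → ℂ := fun j => if j = Fin.last p then 0 else 1

def CC (p : ℕ) : Matrix (Fin (p+1)) (Fin (p+1)) ℂ :=
  Matrix.of fun j k => if j = Fin.last p ∨ k = Fin.last p then 0 else B (p+1) j k

noncomputable def xv (p k : ℕ) : Fin (p+1) → ℂ := (B (p+1) ^ k).mulVec (ones (p+1))
noncomputable def yv (p k : ℕ) : Fin (p+1) → ℂ := (CC p ^ k).mulVec (uu p)
noncomputable def aa (p k : ℕ) : ℂ := ones (p+1) ⬝ᵥ xv p k
noncomputable def ss (p k : ℕ) : ℂ := ee p ⬝ᵥ xv p k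
noncomputable def tt (p k : ℕ) : ℂ := uu p ⬝ᵥ xv p k
noncomputable def bb (p k : ℕ) : ℂ := uu p ⬝ᵥ yv p k

variable (p : ℕ)

lemma ones_eq : ones (p+1) = uu p + ee p := by
  ext j; by_cases h : j = Fin.last p <;> simp [ones, uu, ee, h]

lemma ee_dot_uu : ee p ⬝ᵥ uu p = 0 := by
  simp only [ee, uu, dotProduct]
  rw [Finset.sum_eq_zero]
  intro x _
  by_cases h : x = Fin.last p <;> simp [h]

lemma uu_dot_ee : uu p ⬝ᵥ ee p = 0 := by
  simp [ee, uu, dotProduct]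

lemma ee_dot_ee : ee p ⬝ᵥ ee p = 1 := by
  simp [ee, dotProduct]

lemma ss_zero : ss p 0 = 1 := by
  simp [ss, xv, ee, ones, dotProduct]

lemma aa_zero : aa p 0 = (p : ℂ) + 1 := by
  simp [aa, xv, ones, dotProduct]

lemma ee_dot_CC_mulVec (v : Fin (p+1) → ℂ) : ee p ⬝ᵥ (CC p).mulVec v = 0 := by
  simp [ee, dotProduct, Matrix.mulVec, CC]

lemma CC_mulVec_ee : (CC p).mulVec (ee p) = 0 := by
  ext j
  simp [Matrix.mulVec, dotProduct, ee, CC]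

lemma ee_dot_yv (k : ℕ) : ee p ⬝ᵥ yv p k = 0 := by
  cases k with
  | zero =>
    simp only [yv, pow_zero, Matrix.one_mulVec]
    exact ee_dot_uu p
  | succ k =>
    rw [yv, pow_succ', ← Matrix.mulVec_mulVec]
    exact ee_dot_CC_mulVec p _

lemma CC_mulVec_yv (k : ℕ) : (CC p).mulVec (yv p k) = yv p (k+1) := by
  rw [yv, yv, pow_succ', Matrix.mulVec_mulVec]



lemma mulVec_finsum {n : ℕ} (M : Matrix (Fin n) (Fin n) ℂ) (s : Finset ℕ) (f : ℕ → Fin n → ℂ) :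
    M.mulVec (∑ j ∈ s, f j) = ∑ j ∈ s, M.mulVec (f j) := by
  ext i
  simp only [Matrix.mulVec, dotProduct, Finset.sum_apply, Finset.mul_sum]
  exact Finset.sum_comm

lemma dot_finsum {n : ℕ} (v : Fin n → ℂ) (s : Finset ℕ) (f : ℕ → Fin n → ℂ) :
    v ⬝ᵥ (∑ j ∈ s, f j) = ∑ j ∈ s, v ⬝ᵥ f j := by
  simp only [dotProduct, Finset.sum_apply, Finset.mul_sum]
  exact Finset.sum_comm

variable (p : ℕ)

lemma ee_dot (v : Fin (p+1) → ℂ) : ee p ⬝ᵥ v = v (Fin.last p) := by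
  simp [ee, dotProduct, ite_mul, one_mul, zero_mul, Finset.sum_ite_eq']

lemma B_mulVec_dec (v : Fin (p+1) → ℂ) :
    (B (p+1)).mulVec v = (CC p).mulVec v
      + (Complex.I * (ee p ⬝ᵥ v)) • uu p - (Complex.I * (uu p ⬝ᵥ v)) • ee p := by
  ext j
  by_cases hj : j = Fin.last p
  · subst hj
    have hC : ((CC p).mulVec v) (Fin.last p) = 0 := by
      simp [Matrix.mulVec, dotProduct, CC]
    have hL : ((B (p+1)).mulVec v) (Fin.last p) = -(Complex.I * (uu p ⬝ᵥ v)) := by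
      simp only [Matrix.mulVec, dotProduct, uu, B, Matrix.of_apply, Finset.mul_sum, neg_mul,
        Finset.sum_neg_distrib, ← Finset.sum_neg_distrib]
      refine Finset.sum_congr rfl fun k _ => ?_
      by_cases hk : k = Fin.last p
      · subst hk; simp
      · have hlt : k < Fin.last p := lt_of_le_of_ne (Fin.le_last k) hk
        simp [hlt, hlt.not_gt, hk, mul_comm]
    simp [hL, hC, uu, ee]
  · have hlt : j < Fin.last p := lt_of_le_of_ne (Fin.le_last j) hj
    have key : ∀ k, B (p+1) j k = CC p j k + Complex.I * ee p k := by
      intro k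
      by_cases hk : k = Fin.last p
      · subst hk; simp [CC, hj, B, hlt, ee]
      · simp [CC, hj, hk, ee]
    have hB : ((B (p+1)).mulVec v) j = ((CC p).mulVec v) j + Complex.I * (ee p ⬝ᵥ v) := by
      simp only [Matrix.mulVec, dotProduct]
      rw [Finset.sum_congr rfl (fun k _ => by rw [key k])]
      simp only [add_mul, Finset.sum_add_distrib]
      congr 1
      rw [Finset.mul_sum]
      refine Finset.sum_congr rfl fun k _ => by ring
    simp [hB, uu, ee, hj]

lemma xv_succ (k : ℕ) : xv p (k+1) = (B (p+1)).mulVec (xv p k) := by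
  rw [xv, xv, pow_succ', ← Matrix.mulVec_mulVec]

lemma ss_succ (k : ℕ) : ss p (k+1) = -(Complex.I * tt p k) := by
  rw [ss, xv_succ, B_mulVec_dec]
  simp [dotProduct_add, dotProduct_sub, dotProduct_smul, ee_dot_uu, ee_dot_ee,
    ee_dot_CC_mulVec, tt]

lemma Q : ∀ k, xv p k = yv p k
    + (∑ j ∈ Finset.range k, (Complex.I * ss p j) • yv p (k-1-j)) + ss p k • ee p := by
  intro k
  induction k with
  | zero =>
    simp only [Finset.range_zero, Finset.sum_empty, add_zero, ss_zero, one_smul]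
    rw [xv, yv, pow_zero, pow_zero, Matrix.one_mulVec, Matrix.one_mulVec, ones_eq]
  | succ k ih =>
    rw [xv_succ, ih, B_mulVec_dec]
    have h1 : (CC p).mulVec (yv p k
        + (∑ j ∈ Finset.range k, (Complex.I * ss p j) • yv p (k-1-j)) + ss p k • ee p)
        = yv p (k+1) + ∑ j ∈ Finset.range k, (Complex.I * ss p j) • yv p (k-j) := by
      rw [Matrix.mulVec_add, Matrix.mulVec_add, Matrix.mulVec_smul, CC_mulVec_ee,
        mulVec_finsum, CC_mulVec_yv]
      simp only [smul_zero, add_zero]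
      congr 1
      refine Finset.sum_congr rfl fun j hj => ?_
      have hj' := Finset.mem_range.mp hj
      rw [Matrix.mulVec_smul, CC_mulVec_yv, show k - 1 - j + 1 = k - j from by omega]
    have h2 : ee p ⬝ᵥ (yv p k
        + (∑ j ∈ Finset.range k, (Complex.I * ss p j) • yv p (k-1-j)) + ss p k • ee p)
        = ss p k := by
      rw [dotProduct_add, dotProduct_add, dot_finsum]
      simp [dotProduct_smul, ee_dot_yv, ee_dot_ee]
    have h3 : uu p ⬝ᵥ (yv p k
        + (∑ j ∈ Finset.range k, (Complex.I * ss p j) • yv p (k-1-j)) + ss p k • ee p)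
        = tt p k := by
      rw [← ih]; rfl
    rw [h1, h2, h3]
    have h4 : ∑ j ∈ Finset.range (k+1), (Complex.I * ss p j) • yv p (k+1-1-j)
        = (∑ j ∈ Finset.range k, (Complex.I * ss p j) • yv p (k-j))
          + (Complex.I * ss p k) • yv p 0 := by
      rw [Finset.sum_range_succ]
      simp
    rw [h4, ss_succ]
    have huy : uu p = yv p 0 := by rw [yv, pow_zero, Matrix.one_mulVec]
    rw [huy]
    module

lemma tt_eq (k : ℕ) : tt p k = bb p k + ∑ j ∈ Finset.range k, (Complex.I * ss p j) * bb p (k-1-j) := by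
  rw [tt, Q p k, dotProduct_add, dotProduct_add, dot_finsum]
  simp [dotProduct_smul, uu_dot_ee, bb, smul_eq_mul]

lemma aa_eq_tt_add_ss (k : ℕ) : aa p k = tt p k + ss p k := by
  rw [aa, tt, ss, ones_eq, add_dotProduct]

lemma CC_transpose : (CC p)ᵀ = -(CC p) := by
  ext j k
  simp only [Matrix.transpose_apply, Matrix.neg_apply, CC, Matrix.of_apply]
  by_cases h : j = Fin.last p ∨ k = Fin.last p
  · rw [if_pos h.symm, if_pos h, neg_zero]
  · rw [if_neg (fun hc => h hc.symm), if_neg h, B_apply_symm]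

lemma bb_odd (k : ℕ) (hk : Odd k) : bb p k = 0 :=
  dot_pow_odd (CC p) (CC_transpose p) (uu p) k hk

lemma aa_odd (k : ℕ) (hk : Odd k) : aa p k = 0 :=
  dot_pow_odd (B (p+1)) (B_transpose (p+1)) (ones (p+1)) k hk



lemma tt_eq_aa_sub (k : ℕ) : tt p k = aa p k - ss p k := by
  rw [aa_eq_tt_add_ss]; ring

lemma ss_even_succ (l : ℕ) : ss p (2*l+2) = tt p (2*l) := by
  have h1 : ss p (2*l+1+1) = -(Complex.I * tt p (2*l+1)) := ss_succ p (2*l+1)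
  have h2 : tt p (2*l+1) = -(ss p (2*l+1)) := by
    have h := aa_eq_tt_add_ss p (2*l+1)
    have ha := aa_odd p (2*l+1) ⟨l, by ring⟩
    linear_combination ha - h
  have h3 : ss p (2*l+1) = -(Complex.I * tt p (2*l)) := ss_succ p (2*l)
  have hI : Complex.I * Complex.I = -1 := Complex.I_mul_I
  rw [show 2*l+2 = 2*l+1+1 from rfl, h1, h2, h3]
  linear_combination (-(tt p (2*l))) * hI

lemma I_mul_ss_odd (l : ℕ) : Complex.I * ss p (2*l+1) = aa p (2*l) - ss p (2*l) := by
  have h3 : ss p (2*l+1) = -(Complex.I * tt p (2*l)) := ss_succ p (2*l)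
  have hI : Complex.I * Complex.I = -1 := Complex.I_mul_I
  rw [h3, tt_eq_aa_sub]
  linear_combination (-(aa p (2*l) - ss p (2*l))) * hI

lemma sum_even_vanish (F : ℕ → ℂ) : ∀ m : ℕ, (∀ l, l < m → F (2*l) = 0) →
    ∑ j ∈ Finset.range (2*m), F j = ∑ l ∈ Finset.range m, F (2*l+1) := by
  intro m
  induction m with
  | zero => simp
  | succ m ih =>
    intro h
    rw [show 2*(m+1) = 2*m+1+1 from by ring, Finset.sum_range_succ, Finset.sum_range_succ,
      Finset.sum_range_succ, ih (fun l hl => h l (by omega)), h m (by omega)]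
    ring

lemma tt_even (m : ℕ) : tt p (2*m) = bb p (2*m)
    + ∑ l ∈ Finset.range m, (aa p (2*l) - ss p (2*l)) * bb p (2*(m-1-l)) := by
  rw [tt_eq]
  congr 1
  rw [sum_even_vanish (fun j => (Complex.I * ss p j) * bb p (2*m-1-j)) m (fun l hl => by
    have hodd : Odd (2*m-1-2*l) := ⟨m-1-l, by omega⟩
    show Complex.I * ss p (2*l) * bb p (2*m-1-2*l) = 0
    rw [bb_odd p _ hodd, mul_zero])]
  refine Finset.sum_congr rfl fun l hl => ?_
  have hl' := Finset.mem_range.mp hl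
  rw [show 2*m-1-(2*l+1) = 2*(m-1-l) from by omega, I_mul_ss_odd p l]

lemma ss_sum (m : ℕ) : ss p (2*(m+1)) = ∑ l ∈ Finset.range (m+1), ss p (2*l) * bb p (2*(m-l)) := by
  have h0 : ss p (2*(m+1)) = tt p (2*m) := by
    rw [show 2*(m+1) = 2*m+2 from by ring]; exact ss_even_succ p m
  rw [h0, tt_even, Finset.sum_range_succ']
  rw [show (2*0 : ℕ) = 0 from rfl, ss_zero, one_mul, show m - 0 = m from rfl, add_comm]
  congr 1
  refine Finset.sum_congr rfl fun l hl => ?_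
  rw [show 2*(l+1) = 2*l+2 from by ring, ss_even_succ, tt_eq_aa_sub,
    show m-(l+1) = m-1-l from by omega]

lemma aa_main (m : ℕ) : aa p (2*(m+1)) = bb p (2*(m+1))
    + ∑ l ∈ Finset.range (m+1), aa p (2*l) * bb p (2*(m-l)) := by
  rw [aa_eq_tt_add_ss, tt_even p (m+1), ss_sum p m, add_assoc]
  congr 1
  rw [← Finset.sum_add_distrib]
  refine Finset.sum_congr rfl fun l hl => ?_
  rw [show (m+1)-1-l = m-l from by omega]
  ring


lemma CC_apply_cast (j k : Fin p) : CC p j.castSucc k.castSucc = B p j k := by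
  have hj : j.castSucc ≠ Fin.last p := (Fin.castSucc_lt_last j).ne
  have hk : k.castSucc ≠ Fin.last p := (Fin.castSucc_lt_last k).ne
  simp [CC, B, hj, hk, Fin.castSucc_lt_castSucc_iff]

lemma CC_last_row (k : Fin (p+1)) : CC p (Fin.last p) k = 0 := by simp [CC]

lemma CC_pow_block : ∀ m : ℕ, ∀ j l : Fin p, (CC p ^ m) j.castSucc l.castSucc = (B p ^ m) j l := by
  intro m
  induction m with
  | zero =>
    intro j l
    simp [Matrix.one_apply, Fin.castSucc_inj]
  | succ m ih =>
    intro j l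
    rw [pow_succ, pow_succ, Matrix.mul_apply, Matrix.mul_apply, Fin.sum_univ_castSucc]
    have hcol : CC p (Fin.last p) l.castSucc = 0 := CC_last_row p _
    rw [hcol, mul_zero, add_zero]
    refine Finset.sum_congr rfl fun x _ => ?_
    rw [ih, CC_apply_cast]

lemma uu_last : uu p (Fin.last p) = 0 := by simp [uu]

lemma uu_cast (j : Fin p) : uu p j.castSucc = 1 := by
  simp [uu, (Fin.castSucc_lt_last j).ne]

lemma bb_eq (m : ℕ) : bb p m = ones p ⬝ᵥ ((B p) ^ m).mulVec (ones p) := by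
  rw [bb, yv]
  simp only [dotProduct, Matrix.mulVec, ones, mul_one, one_mul]
  rw [Fin.sum_univ_castSucc, uu_last, zero_mul, add_zero]
  refine Finset.sum_congr rfl fun j _ => ?_
  rw [uu_cast, one_mul, Fin.sum_univ_castSucc, uu_last, mul_zero, add_zero]
  refine Finset.sum_congr rfl fun k _ => ?_
  rw [uu_cast, mul_one, CC_pow_block]

lemma d_eq_bb (k : ℕ) : d p k = bb p (2*k) := by
  rw [d, trace_J, bb_eq]

lemma d_eq_aa (m : ℕ) : d (p+1) m = aa p (2*m) := by
  rw [d, trace_J, aa, xv]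

lemma main (m : ℕ) : d (p+1) (m+1) = d p (m+1)
    + ∑ k ∈ Finset.range (m+1), d p k * d (p+1) (m+1-k-1) := by
  rw [d_eq_aa, d_eq_bb, show 2*(m+1) = 2*(m+1) from rfl, aa_main p m]
  congr 1
  rw [← Finset.sum_range_reflect (fun l => aa p (2*l) * bb p (2*(m-l))) (m+1)]
  refine Finset.sum_congr rfl fun k hk => ?_
  have hk' := Finset.mem_range.mp hk
  rw [d_eq_bb, d_eq_aa]
  rw [show m+1-1-k = m-k from by omega, show m - (m-k) = k from by omega,
    show m+1-k-1 = m-k from by omega]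
  ring

end ZZ

theorem stmt_10 :
    (∀ n : ℕ, 1 ≤ n → d n 0 = n) ∧
    (∀ m : ℕ, 1 ≤ m → d 1 m = 0) ∧
    ∀ n m : ℕ, 2 ≤ n → 1 ≤ m →
      d n m = d (n - 1) m + ∑ k ∈ Finset.range m, d (n - 1) k * d n (m - k - 1) := by
  refine ⟨?_, ?_, ?_⟩
  · intro n hn
    simp [d, _root_.J, Matrix.trace, Matrix.diag]
  · intro m hm
    have hB : B 1 = 0 := by
      ext j k
      fin_cases j <;> fin_cases k <;> simp [B]
    rw [d, hB, zero_pow (by omega : 2*m ≠ 0)]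
    simp
  · intro n m h2 h1
    obtain ⟨p, rfl⟩ : ∃ p, n = p + 2 := ⟨n - 2, by omega⟩
    obtain ⟨m', rfl⟩ : ∃ m', m = m' + 1 := ⟨m - 1, by omega⟩
    have h := ZZ.main (p+1) m'
    simpa using h
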